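/- arXiv:0712.1842 — 2 statements merged into one kernel-verified Lean document; each statement's English description precedes it below -/
import Mathlib

section
/- Let φ : A → B(H₁ ⊕ H₂) be a *-representation with block decomposition φ(a) = [[φ₁₁(a), φ₁₂(a)], [φ₂₁(a), φ₂₂(a)]]. If φ₁₁ is a *-homomorphism modulo the compact operators K(H₁) (i.e., φ₁₁(ab) − φ₁₁(a)φ₁₁(b) and φ₁₁(a*) − φ₁₁(a)* are compact for all a, b), then φ₁₂(a) and φ₂₁(a) are compact for every a ∈ A, and φ₂₂ is a *-homomorphism modulo K(H₂). -/
lemma compact_of_star_mul_self {H : Type*} [NormedAddCommGroup H] [InnerProductSpace ℂ H]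
    [CompleteSpace H] (T : H →L[ℂ] H) (h : IsCompactOperator ⇑(star T * T)) :
    IsCompactOperator ⇑T := by
  have key : ∀ v : H, ‖T v‖ ^ 2 ≤ ‖(star T * T) v‖ * ‖v‖ := by
    intro v
    have h1 : ((star T * T) v) = (ContinuousLinearMap.adjoint T) (T v) := rfl
    have h2 : (‖T v‖ ^ 2 : ℝ) = RCLike.re (inner ℂ ((star T * T) v) v : ℂ) := by
      rw [h1, ContinuousLinearMap.adjoint_inner_left, inner_self_eq_norm_sq]
    rw [h2]
    calc RCLike.re (inner ℂ ((star T * T) v) v : ℂ) ≤ ‖(inner ℂ ((star T * T) v) v : ℂ)‖ :=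
          RCLike.re_le_norm _
      _ ≤ ‖(star T * T) v‖ * ‖v‖ := norm_inner_le_norm _ _
  have hTB : TotallyBounded (⇑T '' Metric.ball 0 1) := by
    rw [Metric.totallyBounded_iff]
    intro ε hε
    have hS : TotallyBounded (⇑(star T * T) '' Metric.ball 0 1) :=
      (IsCompactOperator.isCompact_closure_image_ball (𝕜₁ := ℂ)
        (f := ((star T * T : H →L[ℂ] H) : H →ₗ[ℂ] H)) h 1).totallyBounded.subset
        subset_closure
    have hδ : (0:ℝ) < ε ^ 2 / 4 := by positivity
    obtain ⟨t, hts, htf, hcov⟩ :=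
      totallyBounded_iff_subset.mp hS _ (Metric.dist_mem_uniformity hδ)
    choose g hg1 hg2 using fun y (hy : y ∈ t) => hts hy
    refine ⟨⇑T '' {x | ∃ y hy, g y hy = x}, ((htf.dependent_image g).image _), ?_⟩
    rintro z ⟨x, hx, rfl⟩
    obtain ⟨y, hy, hxy⟩ := Set.mem_iUnion₂.mp (hcov ⟨x, hx, rfl⟩)
    simp only [Set.mem_setOf_eq] at hxy
    refine Set.mem_iUnion₂.mpr ⟨T (g y hy), ⟨g y hy, ⟨y, hy, rfl⟩, rfl⟩, ?_⟩
    rw [Metric.mem_ball, dist_eq_norm]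
    have h4 : ‖T x - T (g y hy)‖ ^ 2 ≤ ‖(star T * T) (x - g y hy)‖ * ‖x - g y hy‖ := by
      have := key (x - g y hy); rwa [map_sub] at this
    have h5 : ‖(star T * T) (x - g y hy)‖ < ε ^ 2 / 4 := by
      rw [map_sub, hg2 y hy, ← dist_eq_norm]
      exact hxy
    have h6 : ‖x - g y hy‖ < 2 := by
      have hx' : ‖x‖ < 1 := by simpa using hx
      have hg' : ‖g y hy‖ < 1 := by simpa using hg1 y hy
      calc ‖x - g y hy‖ ≤ ‖x‖ + ‖g y hy‖ := norm_sub_le _ _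
        _ < 2 := by linarith
    have h7 : ‖T x - T (g y hy)‖ ^ 2 < ε ^ 2 := by
      calc ‖T x - T (g y hy)‖ ^ 2 ≤ ‖(star T * T) (x - g y hy)‖ * ‖x - g y hy‖ := h4
        _ ≤ ‖(star T * T) (x - g y hy)‖ * 2 := by
            have := norm_nonneg ((star T * T) (x - g y hy))
            nlinarith [norm_nonneg (x - g y hy)]
        _ < ε ^ 2 := by nlinarith
    exact lt_of_pow_lt_pow_left₀ 2 hε.le h7
  exact (isCompactOperator_iff_isCompact_closure_image_ball (𝕜₁ := ℂ)
    (T : H →ₗ[ℂ] H) one_pos).mpr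
    (TotallyBounded.isCompact_of_isClosed hTB.closure isClosed_closure)

lemma compact_star_of_compact {H : Type*} [NormedAddCommGroup H] [InnerProductSpace ℂ H]
    [CompleteSpace H] (T : H →L[ℂ] H) (h : IsCompactOperator ⇑T) :
    IsCompactOperator ⇑(star T) := by
  apply compact_of_star_mul_self
  rw [star_star]
  exact h.comp_clm (star T)

/-- block lemma: if the `(1,1)` corner `a ↦ Pφ(a)P` of a
*-representation `φ` is a *-homomorphism modulo the compacts (`P` an orthogonal
projection), then both off-diagonal corners `Pφ(a)(1-P)` and `(1-P)φ(a)P` are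
compact for every `a`, and the `(2,2)` corner is a *-homomorphism modulo the
compacts. -/
theorem stmt4
    {H : Type*} [NormedAddCommGroup H] [InnerProductSpace ℂ H] [CompleteSpace H]
    {A : Type*} [NonUnitalNormedRing A] [StarRing A] [CStarRing A]
    [NormedSpace ℂ A] [SMulCommClass ℂ A A] [IsScalarTower ℂ A A] [StarModule ℂ A]
    (φ : A →⋆ₙₐ[ℂ] (H →L[ℂ] H))
    (P : H →L[ℂ] H) (hPidem : IsIdempotentElem P) (hPsa : IsSelfAdjoint P)
    (h11mul : ∀ a b : A,
      IsCompactOperator ⇑(P * φ (a * b) * P - (P * φ a * P) * (P * φ b * P)))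
    (h11star : ∀ a : A,
      IsCompactOperator ⇑(P * φ (star a) * P - star (P * φ a * P))) :
    (∀ a : A, IsCompactOperator ⇑(P * φ a * (1 - P))) ∧
    (∀ a : A, IsCompactOperator ⇑((1 - P) * φ a * P)) ∧
    (∀ a b : A,
      IsCompactOperator
        ⇑((1 - P) * φ (a * b) * (1 - P) -
            ((1 - P) * φ a * (1 - P)) * ((1 - P) * φ b * (1 - P)))) ∧
    (∀ a : A,
      IsCompactOperator
        ⇑((1 - P) * φ (star a) * (1 - P) - star ((1 - P) * φ a * (1 - P)))) := by
  have hPP : P * P = P := hPidem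
  have hP2 : ∀ z : H →L[ℂ] H, P * (P * z) = P * z := fun z => by rw [← mul_assoc, hPP]
  have hQsa : IsSelfAdjoint (1 - P : H →L[ℂ] H) := (IsSelfAdjoint.one (H →L[ℂ] H)).sub hPsa
  have hQ2 : ∀ z : H →L[ℂ] H, (1 - P) * ((1 - P) * z) = (1 - P) * z := fun z => by
    rw [← mul_assoc, (hPidem.one_sub : ((1:H →L[ℂ] H) - P) * (1 - P) = 1 - P)]
  have hK : ∀ a b : A, IsCompactOperator ⇑(P * φ a * ((1 - P) * (φ b * P))) := by
    intro a b
    have e : P * φ (a * b) * P - (P * φ a * P) * (P * φ b * P)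
        = P * φ a * ((1 - P) * (φ b * P)) := by
      simp only [map_mul, mul_sub, sub_mul, mul_one, one_mul, mul_assoc, hP2]
    rw [← e]; exact h11mul a b
  have c21 : ∀ a : A, IsCompactOperator ⇑((1 - P) * φ a * P) := by
    intro a
    apply compact_of_star_mul_self
    have e : star ((1 - P) * φ a * P) * ((1 - P) * φ a * P)
        = P * φ (star a) * ((1 - P) * (φ a * P)) := by
      simp only [star_mul, hQsa.star_eq, hPsa.star_eq, map_star, mul_assoc, hQ2]
    rw [e]; exact hK (star a) a
  have c12 : ∀ a : A, IsCompactOperator ⇑(P * φ a * (1 - P)) := by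
    intro a
    have e : P * φ a * (1 - P) = star ((1 - P) * φ (star a) * P) := by
      simp only [star_mul, hQsa.star_eq, hPsa.star_eq, map_star, star_star, mul_assoc]
    rw [e]; exact compact_star_of_compact _ (c21 (star a))
  refine ⟨c12, c21, ?_, ?_⟩
  · intro a b
    have e : (1 - P) * φ (a * b) * (1 - P) -
        ((1 - P) * φ a * (1 - P)) * ((1 - P) * φ b * (1 - P))
        = ((1 - P) * φ a * P) * (φ b * (1 - P)) := by
      simp only [map_mul, mul_sub, sub_mul, mul_one, one_mul, mul_assoc, hQ2, hP2]
      abel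
    rw [e]; exact (c21 a).comp_clm (φ b * (1 - P))
  · intro a
    have e : (1 - P) * φ (star a) * (1 - P) - star ((1 - P) * φ a * (1 - P)) = 0 := by
      simp only [star_mul, hQsa.star_eq, map_star, mul_assoc, sub_self]
    rw [e]
    simpa using isCompactOperator_zero
end

section
/- If τ : A → Q(H) is a unital injective extension of a unital separable C*-algebra A admitting a completely positive lifting ψ : A → B(H), then via Stinespring dilation ψ(a) = V*φ(a)V with φ a nondegenerate representation on H₀ and V an isometry, the projection P₁ = VV* essentially commutes with φ(A) (i.e., [P₁, φ(a)] is compact for all a ∈ A), and τ is unitarily equivalent to the compression extension a ↦ π(P₁φ(a)P₁) on P₁H₀. -/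
open ContinuousLinearMap

section Aux

variable {E F : Type*} [NormedAddCommGroup E] [InnerProductSpace ℂ E] [CompleteSpace E]
  [NormedAddCommGroup F] [InnerProductSpace ℂ F] [CompleteSpace F]

lemma aux_compact_of_adjoint_comp (T : E →L[ℂ] F)
    (h : IsCompactOperator ⇑(adjoint T ∘L T)) : IsCompactOperator ⇑T := by
  have hiff := isCompactOperator_iff_isCompact_closure_image_closedBall
    (𝕜₁ := ℂ) (T : E →ₗ[ℂ] F) one_pos
  rw [ContinuousLinearMap.coe_coe] at hiff
  rw [hiff]
  set B : Set E := Metric.closedBall 0 1 with hB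
  set S : E →L[ℂ] E := adjoint T ∘L T with hS
  -- the image of the ball under S is totally bounded
  have hSB : TotallyBounded (⇑S '' B) := by
    have := h.isCompact_closure_image_closedBall (𝕜₁ := ℂ) 1
    exact (this.totallyBounded).subset subset_closure
  -- show the image of the ball under T is totally bounded
  have hTB : TotallyBounded (⇑T '' B) := by
    rw [Metric.totallyBounded_iff]
    intro ε hε
    obtain ⟨t, hts, htf, hcover⟩ := totallyBounded_iff_subset.mp hSB
      _ (Metric.dist_mem_uniformity (show (0:ℝ) < ε^2/4 by positivity))
    classical
    let g : E → E := fun y => if hy : y ∈ ⇑S '' B then hy.choose else 0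
    refine ⟨(fun y => T (g y)) '' t, htf.image _, ?_⟩
    rintro _ ⟨x, hx, rfl⟩
    obtain ⟨y, hy, hdy⟩ := Set.mem_iUnion₂.mp (hcover ⟨x, hx, rfl⟩)
    have hySB : y ∈ ⇑S '' B := hts hy
    have hgB : g y ∈ B ∧ S (g y) = y := by
      have : g y = hySB.choose := dif_pos hySB
      rw [this]
      exact hySB.choose_spec
    refine Set.mem_iUnion₂.mpr ⟨T (g y), ⟨y, hy, rfl⟩, ?_⟩
    rw [Metric.mem_ball]
    have key : ∀ z : E, ‖T z‖^2 = RCLike.re (inner ℂ (S z) z : ℂ) := by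
      intro z
      have : (inner ℂ (S z) z : ℂ) = inner ℂ (T z) (T z) := by
        rw [hS, comp_apply, adjoint_inner_left]
      rw [this, inner_self_eq_norm_sq]
    have hz2 : ‖x - g y‖ ≤ 2 := by
      calc ‖x - g y‖ ≤ ‖x‖ + ‖g y‖ := norm_sub_le _ _
        _ ≤ 1 + 1 := add_le_add (by simpa [hB] using hx) (by simpa [hB] using hgB.1)
        _ = 2 := by norm_num
    have hSz : ‖S (x - g y)‖ < ε^2/4 := by
      have : S (x - g y) = S x - y := by rw [map_sub, hgB.2]
      rw [this, ← dist_eq_norm]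
      simpa using hdy
    have hTz : ‖T x - T (g y)‖^2 < ε^2 := by
      have h1 : ‖T (x - g y)‖^2 ≤ ‖S (x - g y)‖ * ‖x - g y‖ := by
        rw [key]
        calc RCLike.re (inner ℂ (S (x - g y)) (x - g y) : ℂ)
            ≤ ‖(inner ℂ (S (x - g y)) (x - g y) : ℂ)‖ := RCLike.re_le_norm _
          _ ≤ ‖S (x - g y)‖ * ‖x - g y‖ := norm_inner_le_norm _ _
      have h2 : ‖S (x - g y)‖ * ‖x - g y‖ < ε^2/4 * 2 := by
        rcases eq_or_lt_of_le (norm_nonneg (x - g y)) with hz | hz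
        · rw [← hz]; simp; positivity
        · calc ‖S (x - g y)‖ * ‖x - g y‖ ≤ ‖S (x - g y)‖ * 2 :=
              mul_le_mul_of_nonneg_left hz2 (norm_nonneg _)
            _ < ε^2/4 * 2 := by linarith
      calc ‖T x - T (g y)‖^2 = ‖T (x - g y)‖^2 := by rw [map_sub]
        _ ≤ ‖S (x - g y)‖ * ‖x - g y‖ := h1
        _ < ε^2/4 * 2 := h2
        _ ≤ ε^2 := by nlinarith
    rw [dist_eq_norm]
    exact lt_of_pow_lt_pow_left₀ 2 hε.le (by simpa using hTz)
  exact TotallyBounded.isCompact_of_isClosed hTB.closure isClosed_closure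

lemma aux_adjoint_compact (T : E →L[ℂ] F) (h : IsCompactOperator ⇑T) :
    IsCompactOperator ⇑(adjoint T) := by
  apply aux_compact_of_adjoint_comp
  have : ⇑(adjoint (adjoint T) ∘L adjoint T) = ⇑T ∘ ⇑(adjoint T) := by
    rw [adjoint_adjoint]; rfl
  rw [this]
  exact h.comp_clm (adjoint T)

lemma aux_compact_of_comp_adjoint (T : E →L[ℂ] F)
    (h : IsCompactOperator ⇑(T ∘L adjoint T)) : IsCompactOperator ⇑T := by
  have h1 : IsCompactOperator ⇑(adjoint T) := by
    apply aux_compact_of_adjoint_comp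
    rwa [adjoint_adjoint]
  simpa [adjoint_adjoint] using aux_adjoint_compact (adjoint T) h1

end Aux

open ContinuousLinearMap in
/-- if `τ = π ∘ ψ` is a unital injective extension with a
completely positive lift `ψ`, written via Stinespring as `ψ(a) = V*φ(a)V`
with `φ` a representation and `V` an isometry, then `P₁ = VV*` essentially
commutes with `φ(A)`, and `τ` is unitarily equivalent (via `V`, regarded as a
unitary onto `P₁H₀`) to the compression extension `a ↦ π(P₁φ(a)P₁)`. -/
theorem stmt16
    {H : Type*} [NormedAddCommGroup H] [InnerProductSpace ℂ H] [CompleteSpace H]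
    {H₀ : Type*} [NormedAddCommGroup H₀] [InnerProductSpace ℂ H₀] [CompleteSpace H₀]
    {A : Type*} [NormedRing A] [StarRing A] [CStarRing A]
    [NormedAlgebra ℂ A] [StarModule ℂ A] [TopologicalSpace.SeparableSpace A]
    (ψ : A → (H →L[ℂ] H))
    (hψ1 : ψ 1 = 1)
    (hψmul : ∀ a b : A, IsCompactOperator ⇑(ψ (a * b) - ψ a * ψ b))
    (hψstar : ∀ a : A, IsCompactOperator ⇑(ψ (star a) - star (ψ a)))
    (hψinj : ∀ a : A, IsCompactOperator ⇑(ψ a) → a = 0)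
    (φ : A →⋆ₐ[ℂ] (H₀ →L[ℂ] H₀))
    (V : H →L[ℂ] H₀)
    (hViso : adjoint V ∘L V = 1)
    (hStine : ∀ a : A, ψ a = adjoint V ∘L φ a ∘L V) :
    (∀ a : A,
      IsCompactOperator ⇑((V ∘L adjoint V) * φ a - φ a * (V ∘L adjoint V))) ∧
    (∀ a : A,
      V ∘L ψ a ∘L adjoint V =
        (V ∘L adjoint V) * φ a * (V ∘L adjoint V)) := by
  set P : H₀ →L[ℂ] H₀ := V ∘L adjoint V with hP
  have hPP : P ∘L P = P := by
    rw [hP, comp_assoc, ← comp_assoc (adjoint V), hViso, one_def, id_comp]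
  -- S a := V* ∘ φ a ∘ (1 - P), which is compact for every a
  set S : A → (H₀ →L[ℂ] H) := fun a => adjoint V ∘L (φ a ∘L (1 - P)) with hSdef
  have hadjP : adjoint P = P := by
    rw [hP, adjoint_comp, adjoint_adjoint]
  have hadj1 : adjoint (1 : H₀ →L[ℂ] H₀) = 1 := by rw [one_def, adjoint_id]
  have hadj1P : adjoint ((1 : H₀ →L[ℂ] H₀) - P) = 1 - P := by
    rw [map_sub, hadj1, hadjP]
  have hφstar : ∀ a : A, adjoint (φ a) = φ (star a) := fun a => by
    rw [← star_eq_adjoint, ← map_star]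
  have hadjS : ∀ a : A, adjoint (S a) = (1 - P) ∘L (φ (star a) ∘L V) := by
    intro a
    rw [hSdef]
    simp only [adjoint_comp, adjoint_adjoint, hadj1P, hφstar, comp_assoc]
  have hSSadj : ∀ a : A, S a ∘L adjoint (S a) = ψ (a * star a) - ψ a * ψ (star a) := by
    intro a
    rw [hadjS, hSdef]
    have h1P : (1 - P) ∘L (1 - P) = 1 - P := by
      simp only [sub_comp, comp_sub, one_def, id_comp, comp_id, hPP]
      abel
    calc (adjoint V ∘L (φ a ∘L (1 - P))) ∘L ((1 - P) ∘L (φ (star a) ∘L V))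
        = adjoint V ∘L (φ a ∘L (((1 - P) ∘L (1 - P)) ∘L (φ (star a) ∘L V))) := by
          simp only [comp_assoc]
      _ = adjoint V ∘L (φ a ∘L ((1 - P) ∘L (φ (star a) ∘L V))) := by rw [h1P]
      _ = adjoint V ∘L (φ a ∘L (φ (star a) ∘L V))
            - adjoint V ∘L (φ a ∘L (P ∘L (φ (star a) ∘L V))) := by
          simp only [sub_comp, comp_sub, one_def, id_comp]
      _ = ψ (a * star a) - ψ a * ψ (star a) := by
          congr 1
          · rw [hStine, ← comp_assoc (φ a), ← mul_def, ← map_mul]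
          · rw [hStine a, hStine (star a), hP, mul_def]
            simp only [comp_assoc]
    done
  have hScompact : ∀ a : A, IsCompactOperator ⇑(S a) := by
    intro a
    apply aux_compact_of_comp_adjoint
    rw [hSSadj]
    exact hψmul a (star a)
  constructor
  · intro a
    -- P φ(a) (1-P) = V ∘ S a is compact
    have h1 : IsCompactOperator ⇑(P ∘L (φ a ∘L (1 - P))) := by
      have : P ∘L (φ a ∘L (1 - P)) = V ∘L S a := by
        rw [hSdef, hP, comp_assoc]
      rw [this]
      have := (hScompact a).clm_comp V
      simpa [coe_comp'] using this
    -- (1-P) φ(a) P = adjoint (P φ(star a) (1-P)) is compact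
    have h2 : IsCompactOperator ⇑((1 - P) ∘L (φ a ∘L P)) := by
      have heq : (1 - P) ∘L (φ a ∘L P) = adjoint (P ∘L (φ (star a) ∘L (1 - P))) := by
        simp only [adjoint_comp, hadjP, hadj1P, hφstar, star_star, comp_assoc]
      rw [heq]
      have hc : IsCompactOperator ⇑(P ∘L (φ (star a) ∘L (1 - P))) := by
        have : P ∘L (φ (star a) ∘L (1 - P)) = V ∘L S (star a) := by
          rw [hSdef, hP, comp_assoc]
        rw [this]
        have := (hScompact (star a)).clm_comp V
        simpa [coe_comp'] using this
      exact aux_adjoint_compact _ hc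
    have hdecomp : P * φ a - φ a * P
        = P ∘L (φ a ∘L (1 - P)) - (1 - P) ∘L (φ a ∘L P) := by
      simp only [mul_def, comp_sub, sub_comp, one_def, id_comp, comp_id, comp_assoc]
      abel
    rw [hdecomp]
    exact h1.sub h2
  · intro a
    rw [hStine a, mul_def, mul_def, hP]
    simp only [comp_assoc]
end
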